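/- For all 0<q<1 and all integers n≥2, the consecutive difference of offsets satisfies b_n(q) − b_{n+1}(q) > 2·λ_{n−1}(q)·(κ(q) − λ_{n−1}(q) + q^n). -/

import Mathlib

/-- Partial product of the Euler function: `λ_k(q) = ∏_{i=1}^k (1 - q^i)`, with `λ_0(q) = 1`. -/
noncomputable def eulerLam (q : ℝ) (k : ℕ) : ℝ := ∏ i ∈ Finset.range k, (1 - q ^ (i + 1))

/-- The Euler function `κ(q) = ∏_{i=1}^∞ (1 - q^i)`. -/
noncomputable def eulerKappa (q : ℝ) : ℝ := ∏' i : ℕ, (1 - q ^ (i + 1))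

/-- The tail product `μ_n(q) = ∏_{i=n}^∞ (1 - q^i)`. -/
noncomputable def eulerMu (q : ℝ) (n : ℕ) : ℝ := ∏' i : ℕ, (1 - q ^ (n + i))

/-- The offset `b_n(q) = Σ_{k=1}^n λ_{k-1}(q) λ_{n-k}(q) - n κ(q)²`, the expected number of
posts in a random graph order on `n` elements minus `n κ(q)²`. -/
noncomputable def postOffset (q : ℝ) (n : ℕ) : ℝ :=
  (∑ k ∈ Finset.Icc 1 n, eulerLam q (k - 1) * eulerLam q (n - k)) - n * eulerKappa q ^ 2

section Aux

variable {q : ℝ}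

lemma euler_fac_pos (hq0 : 0 < q) (hq1 : q < 1) (i : ℕ) : 0 < 1 - q ^ (i + 1) := by
  have h := pow_lt_one₀ hq0.le hq1 (Nat.succ_ne_zero i)
  simp only [Nat.succ_eq_add_one] at h
  linarith

lemma euler_fac_le_one (hq0 : 0 < q) (i : ℕ) : 1 - q ^ (i + 1) ≤ 1 := by
  have := pow_pos hq0 (i + 1); linarith

lemma eulerLam_pos (hq0 : 0 < q) (hq1 : q < 1) (k : ℕ) : 0 < eulerLam q k :=
  Finset.prod_pos fun i _ => euler_fac_pos hq0 hq1 i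

lemma eulerLam_succ (q : ℝ) (k : ℕ) :
    eulerLam q (k + 1) = eulerLam q k * (1 - q ^ (k + 1)) :=
  Finset.prod_range_succ _ _

lemma eulerLam_anti (hq0 : 0 < q) (hq1 : q < 1) {j k : ℕ} (h : j ≤ k) : eulerLam q k ≤ eulerLam q j := by
  induction k with
  | zero => simp_all
  | succ m ih =>
    rcases Nat.lt_or_ge j (m + 1) with hj | hj
    · have h1 : eulerLam q m ≤ eulerLam q j := ih (Nat.lt_succ_iff.mp hj)
      have h2 : eulerLam q (m + 1) ≤ eulerLam q m := by
        rw [eulerLam_succ]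
        have := eulerLam_pos hq0 hq1 m
        nlinarith [euler_fac_pos hq0 hq1 m, euler_fac_le_one hq0 m]
      linarith
    · have : j = m + 1 := le_antisymm h hj
      simp [this]

/-- κ(q) is at most any partial product λ_n(q). -/
lemma eulerKappa_le_lam (hq0 : 0 < q) (hq1 : q < 1) (n : ℕ) : eulerKappa q ≤ eulerLam q n := by
  set f : ℕ → ℝ := fun i => 1 - q ^ (i + 1) with hf
  have hfpos : ∀ i, 0 < f i := fun i => euler_fac_pos hq0 hq1 i
  have hfone : ∀ i, f i ≤ 1 := fun i => euler_fac_le_one hq0 i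
  set P : Finset ℕ → ℝ := fun s => ∏ i ∈ s, f i with hP
  have hPpos : ∀ s, 0 < P s := fun s => Finset.prod_pos fun i _ => hfpos i
  have hbdd : BddBelow (Set.range P) := by
    refine ⟨0, ?_⟩
    rintro x ⟨s, rfl⟩
    exact (hPpos s).le
  have hanti : Antitone P := by
    intro s t hst
    have : P t = (∏ i ∈ t \ s, f i) * P s := (Finset.prod_sdiff hst).symm
    rw [this]
    have h1 : (∏ i ∈ t \ s, f i) ≤ 1 := Finset.prod_le_one
      (fun i _ => (hfpos i).le) (fun i _ => hfone i)
    nlinarith [hPpos s, Finset.prod_pos (fun i (_ : i ∈ t \ s) => hfpos i)]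
  have hprod : HasProd f (⨅ s, P s) := tendsto_atTop_ciInf hanti hbdd
  have hk : eulerKappa q = ⨅ s, P s := hprod.tprod_eq
  rw [hk]
  exact ciInf_le hbdd (Finset.range n)

/-- Telescoping identity: `1 - λ_m = ∑_{k<m} λ_k q^{k+1}`. -/
lemma eulerLam_telescope (q : ℝ) (m : ℕ) :
    1 - eulerLam q m = ∑ k ∈ Finset.range m, eulerLam q k * q ^ (k + 1) := by
  induction m with
  | zero => simp [eulerLam]
  | succ m ih =>
    rw [Finset.sum_range_succ, ← ih, eulerLam_succ]
    ring

/-- Sum over `Icc 1 m` rewritten over `range m`. -/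
lemma postSum_eq (q : ℝ) (m : ℕ) :
    (∑ k ∈ Finset.Icc 1 m, eulerLam q (k - 1) * eulerLam q (m - k)) =
      ∑ j ∈ Finset.range m, eulerLam q j * eulerLam q (m - 1 - j) := by
  rw [← Finset.Ico_add_one_right_eq_Icc, Finset.sum_Ico_eq_sum_range]
  simp only [Nat.add_sub_cancel, Nat.succ_sub_one]
  refine Finset.sum_congr rfl fun j hj => ?_
  congr 1
  · congr 1
    omega
  · congr 1
    omega

end Aux

/-- For all `0 < q < 1` and all integers `n ≥ 2`,
`b_n(q) - b_{n+1}(q) > 2·λ_{n-1}(q)·(κ(q) - λ_{n-1}(q) + q^n)`. -/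
theorem postOffset_diff_gt (q : ℝ) (hq0 : 0 < q) (hq1 : q < 1) (n : ℕ) (hn : 2 ≤ n) :
    2 * eulerLam q (n - 1) * (eulerKappa q - eulerLam q (n - 1) + q ^ n) <
      postOffset q n - postOffset q (n + 1) := by
  set Λ : ℕ → ℝ := eulerLam q with hΛ
  set κ : ℝ := eulerKappa q with hκdef
  set L : ℝ := Λ (n - 1) with hLdef
  -- basic facts
  have hLpos : 0 < L := eulerLam_pos hq0 hq1 (n - 1)
  have hqn : 0 < q ^ n := pow_pos hq0 n
  have hn1 : n - 1 + 1 = n := Nat.succ_pred_eq_of_pos (lt_of_lt_of_le Nat.zero_lt_two hn)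
  have hΛn : Λ n = L * (1 - q ^ n) := by
    rw [hLdef, hΛ, ← hn1, eulerLam_succ, hn1]
  -- κ ≤ Λ n < L
  have hκn : κ ≤ Λ n := eulerKappa_le_lam hq0 hq1 n
  have hκL : κ < L := by
    rw [hΛn] at hκn
    nlinarith
  -- rewrite the difference
  have hdiff : postOffset q n - postOffset q (n + 1) =
      (∑ j ∈ Finset.range n, Λ j * Λ (n - 1 - j) * q ^ (n - j)) - Λ n + κ ^ 2 := by
    unfold postOffset
    rw [postSum_eq, postSum_eq]
    have hsucc : (∑ j ∈ Finset.range (n + 1), Λ j * Λ (n + 1 - 1 - j)) =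
        (∑ j ∈ Finset.range n, Λ j * Λ (n - j)) + Λ n := by
      rw [Finset.sum_range_succ]
      simp [hΛ, eulerLam]
    have hsplit : (∑ j ∈ Finset.range n, Λ j * Λ (n - j)) =
        (∑ j ∈ Finset.range n, Λ j * Λ (n - 1 - j))
          - ∑ j ∈ Finset.range n, Λ j * Λ (n - 1 - j) * q ^ (n - j) := by
      rw [← Finset.sum_sub_distrib]
      refine Finset.sum_congr rfl fun j hj => ?_
      have hjn : j < n := Finset.mem_range.mp hj
      have h1 : n - j = (n - 1 - j) + 1 := by omega
      rw [h1, hΛ, eulerLam_succ]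
      have h2 : n - 1 - j + 1 = n - j := by omega
      rw [h2]
      ring
    rw [hsucc, hsplit]
    push_cast
    ring
  rw [hdiff]
  -- split off the j = 0 term
  have hnsplit : (∑ j ∈ Finset.range n, Λ j * Λ (n - 1 - j) * q ^ (n - j)) =
      (∑ k ∈ Finset.range (n - 1), Λ (k + 1) * Λ (n - 2 - k) * q ^ (n - 1 - k))
        + L * q ^ n := by
    rw [← hn1, Finset.sum_range_succ']
    congr 1
    · refine Finset.sum_congr rfl fun k hk => ?_
      have hkn : k < n - 1 := Finset.mem_range.mp hk
      congr 2
      · congr 1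
        omega
      · omega
    · simp [hΛ, hLdef, eulerLam]
  -- key lower bound for the remaining sum
  have hkey : L * (1 - L) ≤
      ∑ k ∈ Finset.range (n - 1), Λ (k + 1) * Λ (n - 2 - k) * q ^ (n - 1 - k) := by
    have htel : 1 - L = ∑ k ∈ Finset.range (n - 1), Λ k * q ^ (k + 1) := by
      rw [hLdef, hΛ]; exact eulerLam_telescope q (n - 1)
    rw [htel, Finset.mul_sum]
    rw [← Finset.sum_range_reflect (fun k => L * (Λ k * q ^ (k + 1))) (n - 1)]
    refine Finset.sum_le_sum fun k hk => ?_
    have hkn : k < n - 1 := Finset.mem_range.mp hk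
    have h1 : n - 1 - 1 - k = n - 2 - k := by omega
    have h2 : n - 2 - k + 1 = n - 1 - k := by omega
    rw [h1, h2]
    have hLle : L ≤ Λ (k + 1) := by
      rw [hLdef]; exact eulerLam_anti hq0 hq1 (by omega)
    have hpos1 : 0 < Λ (n - 2 - k) := eulerLam_pos hq0 hq1 _
    have hpos2 : 0 < q ^ (n - 1 - k) := pow_pos hq0 _
    rw [mul_assoc]
    exact mul_le_mul_of_nonneg_right hLle (mul_nonneg hpos1.le hpos2.le)
  rw [hnsplit]
  nlinarith [sq_nonneg (κ - L), mul_pos (sub_pos.mpr hκL) (sub_pos.mpr hκL)]
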